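/- Let X and A be measurable spaces, κ a Markov kernel from X×A to X, π a Markov kernel from X to A, and let ℓ : X×A → ℝ and r : X×A → ℝ be bounded measurable. Fix α ≥ 0, u ≥ 1, τ ∈ [0,1], and γ ∈ [0,1]. For a bounded measurable Q : X×A → ℝ define Q̃ := Q − α·ℓ, m_Q(x) := ∫_A Q̃(x,a) dπ(x)(a), and F(Q)(x,a) := (1−τ)·Q(x,a) + τ·r(x,a) + τ·m_Q(x) + (τ/u)·( γ · ∫_X m_Q dκ(x,a) − m_Q(x) ). Then for all bounded measurable Q, Q' : X×A → ℝ, ‖F(Q) − F(Q')‖∞ ≤ ( 1 − (1−γ)·τ/u ) · ‖Q − Q'‖∞. -/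
import Mathlib


open MeasureTheory ProbabilityTheory

/-- Sup-norm of a real-valued function. -/
noncomputable def supNorm {Z : Type*} (f : Z → ℝ) : ℝ := ⨆ z, |f z|

/-- Policy-averaged entropy-regularized critic
`m_Q(x) = ∫_A (Q(x,a) − α·ℓ(x,a)) dπ(x)(a)`. -/
noncomputable def mQ {X A : Type*} [MeasurableSpace X] [MeasurableSpace A]
    (π : Kernel X A) (α : ℝ) (ℓ Q : X × A → ℝ) (x : X) : ℝ :=
  ∫ a, (Q (x, a) - α * ℓ (x, a)) ∂(π x)

/-- The single-critic update operator `F_{τ,u}`. -/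
noncomputable def Fop {X A : Type*} [MeasurableSpace X] [MeasurableSpace A]
    (κ : Kernel (X × A) X) (π : Kernel X A) (α : ℝ) (ℓ r : X × A → ℝ)
    (τ u γ : ℝ) (Q : X × A → ℝ) (p : X × A) : ℝ :=
  (1 - τ) * Q p + τ * r p + τ * mQ π α ℓ Q p.1
    + (τ / u) * (γ * (∫ y, mQ π α ℓ Q y ∂(κ p)) - mQ π α ℓ Q p.1)

theorem stmt13 {X A : Type*} [MeasurableSpace X] [MeasurableSpace A]
    (κ : Kernel (X × A) X) [IsMarkovKernel κ]
    (π : Kernel X A) [IsMarkovKernel π]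
    (ℓ r : X × A → ℝ) (hℓm : Measurable ℓ) (hℓb : ∃ C : ℝ, ∀ p, |ℓ p| ≤ C)
    (hrm : Measurable r) (hrb : ∃ C : ℝ, ∀ p, |r p| ≤ C)
    (α : ℝ) (hα : 0 ≤ α) (u : ℝ) (hu : 1 ≤ u)
    (τ : ℝ) (hτ0 : 0 ≤ τ) (hτ1 : τ ≤ 1)
    (γ : ℝ) (hγ0 : 0 ≤ γ) (hγ1 : γ ≤ 1) :
    ∀ Q Q' : X × A → ℝ, Measurable Q → (∃ C : ℝ, ∀ p, |Q p| ≤ C) →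
      Measurable Q' → (∃ C : ℝ, ∀ p, |Q' p| ≤ C) →
      supNorm (fun p => Fop κ π α ℓ r τ u γ Q p - Fop κ π α ℓ r τ u γ Q' p)
        ≤ (1 - (1 - γ) * τ / u) * supNorm (fun p => Q p - Q' p) := by
  rintro Q Q' hQm ⟨CQ, hCQ⟩ hQ'm ⟨CQ', hCQ'⟩
  obtain ⟨Cℓ, hCℓ⟩ := hℓb
  have hu0 : (0 : ℝ) < u := lt_of_lt_of_le one_pos hu
  rcases isEmpty_or_nonempty (X × A) with hE | hNE
  · simp only [supNorm]; rw [iSup_of_empty', iSup_of_empty', Real.sSup_empty, mul_zero]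
  -- basic integrability helper
  have hint : ∀ (g : X × A → ℝ), Measurable g → ∀ C : ℝ, (∀ p, |g p| ≤ C) →
      ∀ x : X, Integrable (fun a => g (x, a)) (π x) := by
    intro g hg C hC x
    exact (integrable_const C).mono'
      ((hg.comp measurable_prodMk_left).aestronglyMeasurable)
      (ae_of_all _ fun a => by simpa using hC (x, a))
  set D : X × A → ℝ := fun p => Q p - Q' p with hD
  set N : ℝ := supNorm D with hNdef
  have hbdd : BddAbove (Set.range fun p => |D p|) := by
    refine ⟨CQ + CQ', ?_⟩
    rintro _ ⟨p, rfl⟩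
    calc |D p| ≤ |Q p| + |Q' p| := abs_sub _ _
    _ ≤ CQ + CQ' := add_le_add (hCQ p) (hCQ' p)
  have hDN : ∀ p, |D p| ≤ N := fun p => le_ciSup hbdd p
  have hN0 : 0 ≤ N := le_trans (abs_nonneg _) (hDN (Classical.arbitrary _))
  -- difference of mQ's
  have hΔ : ∀ x : X, mQ π α ℓ Q x - mQ π α ℓ Q' x = ∫ a, D (x, a) ∂(π x) := by
    intro x
    have h1 : Integrable (fun a => Q (x, a) - α * ℓ (x, a)) (π x) := by
      refine ((hint Q hQm CQ hCQ x).sub ?_)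
      have := (hint ℓ hℓm Cℓ hCℓ x).const_mul α
      simpa using this
    have h2 : Integrable (fun a => Q' (x, a) - α * ℓ (x, a)) (π x) := by
      refine ((hint Q' hQ'm CQ' hCQ' x).sub ?_)
      have := (hint ℓ hℓm Cℓ hCℓ x).const_mul α
      simpa using this
    rw [mQ, mQ, ← integral_sub h1 h2]
    congr 1 with a
    ring
  have hΔN : ∀ x : X, |mQ π α ℓ Q x - mQ π α ℓ Q' x| ≤ N := by
    intro x
    rw [hΔ x]
    have := norm_integral_le_of_norm_le_const (μ := π x)
      (f := fun a => D (x, a)) (C := N) (ae_of_all _ fun a => by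
        simpa [Real.norm_eq_abs] using hDN (x, a))
    simpa [Real.norm_eq_abs, measure_univ] using this
  -- measurability and boundedness of mQ
  have hmQmeas : ∀ (g : X × A → ℝ), Measurable g →
      StronglyMeasurable (fun x => mQ π α ℓ g x) := by
    intro g hg
    exact (hg.sub (measurable_const.mul hℓm)).stronglyMeasurable.integral_kernel_prod_right'
  have hmQbd : ∀ (g : X × A → ℝ) (C : ℝ), (∀ p, |g p| ≤ C) →
      ∀ x, |mQ π α ℓ g x| ≤ C + α * Cℓ := by
    intro g C hC x
    have := norm_integral_le_of_norm_le_const (μ := π x)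
      (f := fun a => g (x, a) - α * ℓ (x, a)) (C := C + α * Cℓ) (ae_of_all _ fun a => by
        have h1 := hC (x, a)
        have h2 := hCℓ (x, a)
        have h3 : |α * ℓ (x, a)| ≤ α * Cℓ := by
          rw [abs_mul, abs_of_nonneg hα]
          exact mul_le_mul_of_nonneg_left h2 hα
        calc ‖g (x, a) - α * ℓ (x, a)‖ ≤ |g (x, a)| + |α * ℓ (x, a)| := abs_sub _ _
        _ ≤ C + α * Cℓ := add_le_add h1 h3)
    simpa [mQ, Real.norm_eq_abs, measure_univ] using this
  have hintmQ : ∀ (g : X × A → ℝ), Measurable g → ∀ C : ℝ, (∀ p, |g p| ≤ C) →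
      ∀ p : X × A, Integrable (fun y => mQ π α ℓ g y) (κ p) := by
    intro g hg C hC p
    exact (integrable_const (C + α * Cℓ)).mono'
      (hmQmeas g hg).aestronglyMeasurable
      (ae_of_all _ fun y => by simpa [Real.norm_eq_abs] using hmQbd g C hC y)
  -- difference of outer integrals
  have hJ : ∀ p : X × A,
      (∫ y, mQ π α ℓ Q y ∂(κ p)) - (∫ y, mQ π α ℓ Q' y ∂(κ p))
        = ∫ y, (mQ π α ℓ Q y - mQ π α ℓ Q' y) ∂(κ p) := by
    intro p
    rw [← integral_sub (hintmQ Q hQm CQ hCQ p) (hintmQ Q' hQ'm CQ' hCQ' p)]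
  have hJN : ∀ p : X × A,
      |∫ y, (mQ π α ℓ Q y - mQ π α ℓ Q' y) ∂(κ p)| ≤ N := by
    intro p
    have := norm_integral_le_of_norm_le_const (μ := κ p)
      (f := fun y => mQ π α ℓ Q y - mQ π α ℓ Q' y) (C := N) (ae_of_all _ fun y => by
        simpa [Real.norm_eq_abs] using hΔN y)
    simpa [Real.norm_eq_abs, measure_univ] using this
  -- pointwise bound
  have hpt : ∀ p : X × A,
      |Fop κ π α ℓ r τ u γ Q p - Fop κ π α ℓ r τ u γ Q' p|
        ≤ (1 - (1 - γ) * τ / u) * N := by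
    intro p
    have expand : Fop κ π α ℓ r τ u γ Q p - Fop κ π α ℓ r τ u γ Q' p
        = (1 - τ) * D p + (τ - τ / u) * (mQ π α ℓ Q p.1 - mQ π α ℓ Q' p.1)
          + (τ * γ / u) * (∫ y, (mQ π α ℓ Q y - mQ π α ℓ Q' y) ∂(κ p)) := by
      rw [← hJ p]
      simp only [Fop, hD]
      ring
    have hc1 : (0 : ℝ) ≤ 1 - τ := by linarith
    have hc2 : (0 : ℝ) ≤ τ - τ / u := by
      have : τ / u ≤ τ := div_le_self hτ0 hu
      linarith
    have hc3 : (0 : ℝ) ≤ τ * γ / u := by positivity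
    have b1 : |(1 - τ) * D p| ≤ (1 - τ) * N := by
      rw [abs_mul, abs_of_nonneg hc1]
      exact mul_le_mul_of_nonneg_left (hDN p) hc1
    have b2 : |(τ - τ / u) * (mQ π α ℓ Q p.1 - mQ π α ℓ Q' p.1)| ≤ (τ - τ / u) * N := by
      rw [abs_mul, abs_of_nonneg hc2]
      exact mul_le_mul_of_nonneg_left (hΔN p.1) hc2
    have b3 : |(τ * γ / u) * (∫ y, (mQ π α ℓ Q y - mQ π α ℓ Q' y) ∂(κ p))|
        ≤ (τ * γ / u) * N := by
      rw [abs_mul, abs_of_nonneg hc3]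
      exact mul_le_mul_of_nonneg_left (hJN p) hc3
    have heq : (1 - τ) * N + (τ - τ / u) * N + (τ * γ / u) * N
        = (1 - (1 - γ) * τ / u) * N := by
      field_simp
      ring
    rw [expand]
    calc |(1 - τ) * D p + (τ - τ / u) * (mQ π α ℓ Q p.1 - mQ π α ℓ Q' p.1)
          + (τ * γ / u) * (∫ y, (mQ π α ℓ Q y - mQ π α ℓ Q' y) ∂(κ p))|
        ≤ |(1 - τ) * D p + (τ - τ / u) * (mQ π α ℓ Q p.1 - mQ π α ℓ Q' p.1)|
          + |(τ * γ / u) * (∫ y, (mQ π α ℓ Q y - mQ π α ℓ Q' y) ∂(κ p))| := abs_add_le _ _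
      _ ≤ |(1 - τ) * D p| + |(τ - τ / u) * (mQ π α ℓ Q p.1 - mQ π α ℓ Q' p.1)|
          + |(τ * γ / u) * (∫ y, (mQ π α ℓ Q y - mQ π α ℓ Q' y) ∂(κ p))| := by
            linarith [abs_add_le ((1 - τ) * D p)
              ((τ - τ / u) * (mQ π α ℓ Q p.1 - mQ π α ℓ Q' p.1))]
      _ ≤ (1 - τ) * N + (τ - τ / u) * N + (τ * γ / u) * N := by linarith
      _ = (1 - (1 - γ) * τ / u) * N := heq
  exact ciSup_le hpt
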